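/- Univariate monotone moment–cumulant formula: let A be a field of characteristic zero, let h = Σ_{n≥1} h_n x^n be a one-variable series with zero constant term, and let M_t := 1 + Σ_{n≥1} (t^n/n!)·R^{(n−1)}(h), where R^{(0)}(h) := h and R^{(n)}(h) := R^{(n−1)}(h) ◁ h. Then the coefficient m_n(t) of x^n in M_t equals Σ_{k=1}^{n} Σ_{i_1+⋯+i_k=n, i_j≥1} (i_1+1)(i_1+i_2+1)⋯(i_1+⋯+i_{k−1}+1)·h_{i_1}⋯h_{i_k}·t^k/k!. In particular m_1(t) = h_1 t, m_2(t) = h_2 t + h_1^2 t^2, and m_3(t) = h_3 t + (5/2) h_1 h_2 t^2 + h_1^3 t^3. -/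

import Mathlib

open PowerSeries

variable {A : Type*}

/-- The univariate pre-Lie product, the bilinear extension to series with zero constant
term of the insertion product on monomials `x^a ◁ x^b = Σ_{k=0}^{a} x^k x^b x^{a−k}
= (a+1)·x^{a+b}`. -/
noncomputable def triPS [CommRing A] (f g : PowerSeries A) : PowerSeries A :=
  PowerSeries.mk fun k =>
    ∑ p ∈ Finset.HasAntidiagonal.antidiagonal k, ((p.1 : A) + 1) * coeff p.1 f * coeff p.2 g

/-- Iterated right pre-Lie powers: `RPS h 0 = h = R^{(0)}(h)`, `RPS h n = R^{(n)}(h)`. -/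
noncomputable def RPS [CommRing A] (h : PowerSeries A) : ℕ → PowerSeries A
  | 0 => h
  | n + 1 => triPS (RPS h n) h

/-- The weight `(i_1+1)(i_1+i_2+1)⋯(i_1+⋯+i_{n−1}+1)` of a composition `(i_1,…,i_n)`
(the empty product, for `n = 1`, being `1`). -/
def weight [CommRing A] {k : ℕ} (c : Composition k) : A :=
  ∏ j ∈ Finset.range (c.length - 1), ((c.sizeUpTo (j + 1) : A) + 1)

/-- The product `h_{i_1}⋯h_{i_n}` over the parts of a composition `(i_1,…,i_n)`. -/
noncomputable def prodH [CommRing A] (h : PowerSeries A) {k : ℕ} (c : Composition k) : A :=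
  (c.blocks.map fun i => coeff i h).prod

/-- The series `M_t = 1 + Σ_{n≥1} (t^n/n!)·R^{(n−1)}(h)`; on the coefficient of `x^n` the sum
truncates at `k = n` since `R^{(k−1)}(h)` has vanishing coefficients in degrees below `k`. -/
noncomputable def MtPS [Field A] (h : PowerSeries A) (t : A) : PowerSeries A :=
  PowerSeries.mk fun n =>
    if n = 0 then 1
    else ∑ k ∈ Finset.Icc 1 n, t ^ k / (k.factorial : A) * coeff n (RPS h (k - 1))

/-- Appending a block to a composition. -/
private def compAppend {n : ℕ} (p1 p2 : ℕ) (hp : 0 < p2) (hsum : p1 + p2 = n)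
    (c : Composition p1) : Composition n where
  blocks := c.blocks ++ [p2]
  blocks_pos := by
    intro i hi
    rcases List.mem_append.1 hi with hi | hi
    · exact c.blocks_pos hi
    · rw [List.mem_singleton.1 hi]; exact hp
  blocks_sum := by rw [List.sum_append, c.blocks_sum, List.sum_singleton, hsum]

/-- Truncating a composition. -/
private def compTake {n : ℕ} (m : ℕ) (d : Composition n) : Composition (d.sizeUpTo m) where
  blocks := d.blocks.take m
  blocks_pos := fun hi => d.blocks_pos (List.mem_of_mem_take hi)
  blocks_sum := rfl

private lemma sigma_comp_ext {p q : ℕ × ℕ} {c : Composition p.1} {d : Composition q.1}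
    (h1 : p = q) (h2 : c.blocks = d.blocks) :
    (⟨p, c⟩ : Σ p : ℕ × ℕ, Composition p.1) = ⟨q, d⟩ := by
  cases h1
  exact congrArg (Sigma.mk p) (Composition.ext h2)

private lemma coeff_RPS [Field A] (h : PowerSeries A) (hh : coeff 0 h = 0) :
    ∀ m n : ℕ, coeff n (RPS h m) =
      ∑ c ∈ Finset.univ.filter (fun c : Composition n => c.length = m + 1),
        weight c * prodH h c := by
  intro m
  induction m with
  | zero =>
    intro n
    rcases Nat.eq_zero_or_pos n with rfl | hn
    · have hempty : (Finset.univ.filter (fun c : Composition 0 => c.length = 0 + 1)) = ∅ := by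
        apply Finset.filter_eq_empty_iff.2
        intro c _
        have hb : c.blocks = [] := by
          cases hb : c.blocks with
          | nil => rfl
          | cons a l =>
            have hpos := c.blocks_pos (by rw [hb]; exact List.mem_cons_self)
            have hs := c.blocks_sum
            rw [hb] at hs
            simp at hs
            omega
        simp [Composition.length, hb]
      rw [hempty]
      simpa [RPS] using hh
    · have hset : Finset.univ.filter (fun c : Composition n => c.length = 0 + 1)
          = {Composition.single n hn} := by
        ext c
        simp [Finset.mem_filter, ← Composition.eq_single_iff_length hn]
      rw [hset, Finset.sum_singleton]
      show coeff n h = _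
      simp [weight, prodH]
  | succ m ih =>
    intro n
    have e0 : coeff n (RPS h (m+1)) = ∑ p ∈ Finset.HasAntidiagonal.antidiagonal n,
        ((p.1:A)+1) * coeff p.1 (RPS h m) * coeff p.2 h := by
      simp [RPS, triPS]
    have e1 : coeff n (RPS h (m+1)) =
        ∑ p ∈ (Finset.HasAntidiagonal.antidiagonal n).filter (fun p => 0 < p.2),
          ((p.1:A)+1) * coeff p.1 (RPS h m) * coeff p.2 h := by
      rw [e0]
      refine (Finset.sum_filter_of_ne ?_).symm
      intro p _ hne
      by_contra hp
      have h2 : p.2 = 0 := by omega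
      exact hne (by rw [h2, hh, mul_zero])
    rw [e1]
    have e2 : ∀ p ∈ (Finset.HasAntidiagonal.antidiagonal n).filter (fun p : ℕ × ℕ => 0 < p.2),
        ((p.1:A)+1) * coeff p.1 (RPS h m) * coeff p.2 h
          = ∑ c ∈ Finset.univ.filter (fun c : Composition p.1 => c.length = m + 1),
              ((p.1:A)+1) * (weight c * prodH h c) * coeff p.2 h := by
      intro p _
      rw [ih, Finset.mul_sum, Finset.sum_mul]
    rw [Finset.sum_congr rfl e2, Finset.sum_sigma']
    refine Finset.sum_bij'
      (fun x hx => compAppend x.1.1 x.1.2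
        ((Finset.mem_filter.1 (Finset.mem_sigma.1 hx).1).2)
        (Finset.HasAntidiagonal.mem_antidiagonal.1 (Finset.mem_filter.1 (Finset.mem_sigma.1 hx).1).1)
        x.2)
      (fun d hd => ⟨(d.sizeUpTo (m+1), n - d.sizeUpTo (m+1)), compTake (m+1) d⟩)
      ?_ ?_ ?_ ?_ ?_
    · -- i maps into target
      rintro ⟨⟨p1, p2⟩, c⟩ hx
      have hlen : c.length = m + 1 := (Finset.mem_filter.1 (Finset.mem_sigma.1 hx).2).2
      simp only [Finset.mem_filter, Finset.mem_univ, true_and]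
      show (c.blocks ++ [p2]).length = m + 1 + 1
      rw [List.length_append]
      have hcl : c.blocks.length = m + 1 := hlen
      simp [hcl]
    · -- j maps into source
      intro d hd
      have hlen : d.length = m + 2 := (Finset.mem_filter.1 hd).2
      have hlt : d.sizeUpTo (m+1) < n := by
        have h1 : d.sizeUpTo (m+1) < d.sizeUpTo (m+2) :=
          d.sizeUpTo_strict_mono (by omega)
        have h2 : d.sizeUpTo (m+2) = n := d.sizeUpTo_ofLength_le _ (by omega)
        omega
      refine Finset.mem_sigma.2 ⟨Finset.mem_filter.2 ⟨Finset.HasAntidiagonal.mem_antidiagonal.2 ?_, ?_⟩, ?_⟩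
      · show d.sizeUpTo (m+1) + (n - d.sizeUpTo (m+1)) = n
        have := d.sizeUpTo_le (m+1); omega
      · show 0 < n - d.sizeUpTo (m+1); omega
      · refine Finset.mem_filter.2 ⟨Finset.mem_univ _, ?_⟩
        show (d.blocks.take (m+1)).length = m + 1
        rw [List.length_take]
        have : d.blocks.length = m + 2 := hlen
        omega
    · -- left inverse
      rintro ⟨⟨p1, p2⟩, c⟩ hx
      dsimp only
      have hlen : c.length = m + 1 := (Finset.mem_filter.1 (Finset.mem_sigma.1 hx).2).2
      have hsum : p1 + p2 = n :=
        Finset.HasAntidiagonal.mem_antidiagonal.1 (Finset.mem_filter.1 (Finset.mem_sigma.1 hx).1).1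
      have hp2 : 0 < p2 := (Finset.mem_filter.1 (Finset.mem_sigma.1 hx).1).2
      have hb : (compAppend p1 p2 hp2 hsum c).blocks.take (m+1) = c.blocks := by
        show (c.blocks ++ [p2]).take (m+1) = c.blocks
        exact List.take_left' hlen
      have hs : (compAppend p1 p2 hp2 hsum c).sizeUpTo (m+1) = p1 := by
        show ((compAppend p1 p2 hp2 hsum c).blocks.take (m+1)).sum = p1
        rw [hb, c.blocks_sum]
      refine sigma_comp_ext ?_ ?_
      · show ((compAppend p1 p2 hp2 hsum c).sizeUpTo (m+1),
            n - (compAppend p1 p2 hp2 hsum c).sizeUpTo (m+1)) = (p1, p2)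
        rw [hs]
        have : n - p1 = p2 := by omega
        rw [this]
      · exact hb
    · -- right inverse
      intro d hd
      dsimp only
      have hlen : d.length = m + 2 := (Finset.mem_filter.1 hd).2
      have hlen' : d.blocks.length = m + 2 := hlen
      obtain ⟨a, ha⟩ := List.length_eq_one_iff.1 (show (d.blocks.drop (m+1)).length = 1 by
        rw [List.length_drop]; omega)
      have hd2 : d.blocks = d.blocks.take (m+1) ++ [a] := by
        conv_lhs => rw [← List.take_append_drop (m+1) d.blocks]
        rw [ha]
      have hsum : d.sizeUpTo (m+1) + a = n := by
        have hbs := d.blocks_sum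
        rw [hd2, List.sum_append, List.sum_singleton] at hbs
        exact hbs
      apply Composition.ext
      show (d.blocks.take (m+1)) ++ [n - d.sizeUpTo (m+1)] = d.blocks
      rw [show n - d.sizeUpTo (m+1) = a from by omega, ← hd2]
    · -- terms agree
      rintro ⟨⟨p1, p2⟩, c⟩ hx
      have hlen : c.length = m + 1 := (Finset.mem_filter.1 (Finset.mem_sigma.1 hx).2).2
      have hsum : p1 + p2 = n :=
        Finset.HasAntidiagonal.mem_antidiagonal.1 (Finset.mem_filter.1 (Finset.mem_sigma.1 hx).1).1
      have hp2 : 0 < p2 := (Finset.mem_filter.1 (Finset.mem_sigma.1 hx).1).2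
      set d := compAppend p1 p2 hp2 hsum c with hd
      have hlend : d.length = m + 2 := by
        show (c.blocks ++ [p2]).length = m + 2
        have hcl : c.blocks.length = m + 1 := hlen
        simp [List.length_append, hcl]
      have hsu : ∀ j, j + 1 ≤ m + 1 → d.sizeUpTo (j+1) = c.sizeUpTo (j+1) := by
        intro j hj
        show ((c.blocks ++ [p2]).take (j+1)).sum = (c.blocks.take (j+1)).sum
        rw [List.take_append_of_le_length (by rw [show c.blocks.length = m+1 from hlen]; omega)]
      have hsP1 : d.sizeUpTo (m+1) = p1 := by
        show ((c.blocks ++ [p2]).take (m+1)).sum = p1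
        rw [List.take_left' hlen, c.blocks_sum]
      have hw : weight d = weight c * ((p1 : A) + 1) := by
        unfold weight
        rw [hlend, hlen]
        rw [show m + 2 - 1 = m + 1 from rfl, show m + 1 - 1 = m from rfl]
        rw [Finset.prod_range_succ, hsP1]
        congr 1
        refine Finset.prod_congr rfl fun j hj => ?_
        rw [hsu j (by simp at hj; omega)]
      have hP : prodH h d = prodH h c * coeff p2 h := by
        show ((c.blocks ++ [p2]).map _).prod = _
        rw [List.map_append, List.prod_append]
        simp [prodH]
      rw [hw, hP]
      ring

/-- univariate monotone moment–cumulant formula.  For `h = Σ_{n≥1} h_n x^n`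
with zero constant term, the coefficient `m_n(t)` of `x^n` in `M_t` equals
`Σ_{k=1}^{n} Σ_{i_1+⋯+i_k=n, i_j≥1} (i_1+1)(i_1+i_2+1)⋯(i_1+⋯+i_{k−1}+1)·h_{i_1}⋯h_{i_k}·t^k/k!`.
In particular `m_1(t) = h_1 t`, `m_2(t) = h_2 t + h_1² t²`, and
`m_3(t) = h_3 t + (5/2) h_1 h_2 t² + h_1³ t³`. -/
theorem stmt17 [Field A] [CharZero A] (h : PowerSeries A) (hh : coeff 0 h = 0) :
    (∀ t : A, ∀ n, 1 ≤ n →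
      coeff n (MtPS h t) =
        ∑ k ∈ Finset.Icc 1 n,
          (∑ c ∈ Finset.univ.filter (fun c : Composition n => c.length = k),
            weight c * prodH h c) * t ^ k / (k.factorial : A)) ∧
    (∀ t : A, coeff 1 (MtPS h t) = coeff 1 h * t) ∧
    (∀ t : A, coeff 2 (MtPS h t) = coeff 2 h * t + (coeff 1 h) ^ 2 * t ^ 2) ∧
    (∀ t : A, coeff 3 (MtPS h t) =
      coeff 3 h * t + (5 / 2 : A) * coeff 1 h * coeff 2 h * t ^ 2
        + (coeff 1 h) ^ 3 * t ^ 3) := by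
  have main : ∀ t : A, ∀ n, 1 ≤ n →
      coeff n (MtPS h t) =
        ∑ k ∈ Finset.Icc 1 n,
          (∑ c ∈ Finset.univ.filter (fun c : Composition n => c.length = k),
            weight c * prodH h c) * t ^ k / (k.factorial : A) := by
    intro t n hn
    have : coeff n (MtPS h t) =
        ∑ k ∈ Finset.Icc 1 n, t ^ k / (k.factorial : A) * coeff n (RPS h (k - 1)) := by
      rw [MtPS, coeff_mk, if_neg (by omega)]
    rw [this]
    refine Finset.sum_congr rfl fun k hk => ?_
    have hk1 : 1 ≤ k := (Finset.mem_Icc.1 hk).1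
    rw [coeff_RPS h hh (k-1) n, show k - 1 + 1 = k from by omega]
    field_simp
  refine ⟨main, ?_, ?_, ?_⟩
  · intro t
    have h1 : coeff 1 (MtPS h t) =
        ∑ k ∈ Finset.Icc 1 1, t ^ k / (k.factorial : A) * coeff 1 (RPS h (k - 1)) := by
      simp [MtPS, coeff_mk]
    rw [h1, Finset.Icc_self, Finset.sum_singleton]
    simp [RPS]
    ring
  · intro t
    have h1 : coeff 2 (MtPS h t) =
        ∑ k ∈ Finset.Icc 1 2, t ^ k / (k.factorial : A) * coeff 2 (RPS h (k - 1)) := by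
      simp [MtPS, coeff_mk]
    have hI : Finset.Icc 1 2 = {1, 2} := rfl
    have hR1 : coeff 2 (RPS h 1) = 2 * coeff 1 h * coeff 1 h := by
      show coeff 2 (triPS h h) = _
      simp only [triPS, coeff_mk]
      rw [Finset.Nat.sum_antidiagonal_eq_sum_range_succ_mk]
      simp only [Finset.sum_range_succ, Finset.sum_range_zero, Nat.reduceSub, hh,
        mul_zero, zero_mul, add_zero, zero_add]
      push_cast
      ring
    rw [h1, hI, Finset.sum_pair (by decide)]
    rw [show RPS h (1-1) = h from rfl, show (2:ℕ) - 1 = 1 from rfl, hR1]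
    have h2 : (2:A) ≠ 0 := two_ne_zero
    norm_num [Nat.factorial]
    field_simp
  · intro t
    have h1 : coeff 3 (MtPS h t) =
        ∑ k ∈ Finset.Icc 1 3, t ^ k / (k.factorial : A) * coeff 3 (RPS h (k - 1)) := by
      simp [MtPS, coeff_mk]
    have hI : Finset.Icc 1 3 = {1, 2, 3} := rfl
    have hR1at1 : coeff 1 (RPS h 1) = 0 := by
      show coeff 1 (triPS h h) = _
      simp only [triPS, coeff_mk]
      rw [Finset.Nat.sum_antidiagonal_eq_sum_range_succ_mk]
      simp only [Finset.sum_range_succ, Finset.sum_range_zero, Nat.reduceSub, hh,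
        mul_zero, zero_mul, add_zero, zero_add]
    have hR1at2 : coeff 2 (RPS h 1) = 2 * coeff 1 h * coeff 1 h := by
      show coeff 2 (triPS h h) = _
      simp only [triPS, coeff_mk]
      rw [Finset.Nat.sum_antidiagonal_eq_sum_range_succ_mk]
      simp only [Finset.sum_range_succ, Finset.sum_range_zero, Nat.reduceSub, hh,
        mul_zero, zero_mul, add_zero, zero_add]
      push_cast
      ring
    have hR1at3 : coeff 3 (RPS h 1) = 5 * coeff 1 h * coeff 2 h := by
      show coeff 3 (triPS h h) = _
      simp only [triPS, coeff_mk]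
      rw [Finset.Nat.sum_antidiagonal_eq_sum_range_succ_mk]
      simp only [Finset.sum_range_succ, Finset.sum_range_zero, Nat.reduceSub, hh,
        mul_zero, zero_mul, add_zero, zero_add]
      push_cast
      ring
    have hR1at0 : coeff 0 (RPS h 1) = 0 := by
      show coeff 0 (triPS h h) = _
      simp only [triPS, coeff_mk]
      rw [Finset.Nat.sum_antidiagonal_eq_sum_range_succ_mk]
      simp only [Finset.sum_range_succ, Finset.sum_range_zero, Nat.reduceSub, hh,
        mul_zero, zero_mul, add_zero, zero_add]
    have hR2 : coeff 3 (RPS h 2) = 6 * coeff 1 h * coeff 1 h * coeff 1 h := by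
      show coeff 3 (triPS (RPS h 1) h) = _
      simp only [triPS, coeff_mk]
      rw [Finset.Nat.sum_antidiagonal_eq_sum_range_succ_mk]
      simp only [Finset.sum_range_succ, Finset.sum_range_zero, Nat.reduceSub, hh,
        hR1at0, hR1at1, hR1at2, mul_zero, zero_mul, add_zero, zero_add]
      push_cast
      ring
    rw [h1, hI, Finset.sum_insert (by decide), Finset.sum_pair (by decide)]
    rw [show RPS h (1-1) = h from rfl, show (2:ℕ) - 1 = 1 from rfl,
      show (3:ℕ) - 1 = 2 from rfl, hR1at3, hR2]
    have h2 : (2:A) ≠ 0 := two_ne_zero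
    have h6 : (6:A) ≠ 0 := by norm_num
    norm_num [Nat.factorial]
    field_simp
    ring
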